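/- Let G be a groupoid and let ℂ[G^(n)] denote, for each object c, the free ℂ-vector space on the set of composable strings (g_1,…,g_n) with t(g_1) = c, with G acting by (g_1,…,g_n)·g = (g⁻¹ g_1, g_2,…,g_n). Define t(g_0,…,g_n) = (g_0 g_1 ⋯ g_n, (g_1 ⋯ g_n)⁻¹, g_1,…,g_{n−1}) on strings (g_0,…,g_n) of composable arrows with t(g_0) = s(g_n) (loops of length n+1 based anywhere). Then t^{n+1} = id on such strings. -/

import Mathlib

/-- A groupoid presented algebraically: objects, arrows, source/target, a (partially
meaningful) composition `comp g h = g ∘ h` (meaningful when `src g = tgt h`), inverses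
and units, with the usual axioms holding on composable arrows. -/
structure PreGroupoid where
  Obj : Type
  Arr : Type
  src : Arr → Obj
  tgt : Arr → Obj
  comp : Arr → Arr → Arr
  inv : Arr → Arr
  unit : Obj → Arr
  src_comp : ∀ g h, src g = tgt h → src (comp g h) = src h
  tgt_comp : ∀ g h, src g = tgt h → tgt (comp g h) = tgt g
  assoc : ∀ g h k, src g = tgt h → src h = tgt k → comp (comp g h) k = comp g (comp h k)
  src_unit : ∀ c, src (unit c) = c
  tgt_unit : ∀ c, tgt (unit c) = c
  id_comp : ∀ g, comp (unit (tgt g)) g = g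
  comp_id : ∀ g, comp g (unit (src g)) = g
  src_inv : ∀ g, src (inv g) = tgt g
  tgt_inv : ∀ g, tgt (inv g) = src g
  comp_inv : ∀ g, comp g (inv g) = unit (tgt g)
  inv_comp : ∀ g, comp (inv g) g = unit (src g)

/-- The product `gs i · gs (i+1) ⋯ gs (i+k)` of a segment of a string of arrows. -/
def prodSeg (P : PreGroupoid) (gs : ℕ → P.Arr) (i : ℕ) : ℕ → P.Arr
  | 0 => gs i
  | (k + 1) => P.comp (prodSeg P gs i k) (gs (i + k + 1))

/-- The cyclic operator on the (cyclic) nerve: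
`t(g_0,…,g_n) = (g_0 g_1 ⋯ g_n, (g_1 ⋯ g_n)⁻¹, g_1,…,g_{n-1})`. -/
def cycOp (P : PreGroupoid) (n : ℕ) (gs : ℕ → P.Arr) : ℕ → P.Arr := fun j =>
  if j = 0 then prodSeg P gs 0 n
  else if j = 1 then P.inv (prodSeg P gs 1 (n - 1))
  else gs (j - 1)

lemma src_prodSeg (P : PreGroupoid) (gs : ℕ → P.Arr) (i : ℕ) :
    ∀ k, (∀ m, m < k → P.src (gs (i + m)) = P.tgt (gs (i + m + 1))) →
      P.src (prodSeg P gs i k) = P.src (gs (i + k))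
  | 0, _ => rfl
  | (k + 1), h => by
    have ih := src_prodSeg P gs i k (fun m hm => h m (by omega))
    show P.src (P.comp (prodSeg P gs i k) (gs (i + k + 1))) = _
    rw [P.src_comp _ _ (ih.trans (h k (by omega)))]
    rfl

lemma tgt_prodSeg (P : PreGroupoid) (gs : ℕ → P.Arr) (i : ℕ) :
    ∀ k, (∀ m, m < k → P.src (gs (i + m)) = P.tgt (gs (i + m + 1))) →
      P.tgt (prodSeg P gs i k) = P.tgt (gs i)
  | 0, _ => rfl
  | (k + 1), h => by
    have ihs := src_prodSeg P gs i k (fun m hm => h m (by omega))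
    have ih := tgt_prodSeg P gs i k (fun m hm => h m (by omega))
    show P.tgt (P.comp (prodSeg P gs i k) (gs (i + k + 1))) = _
    rw [P.tgt_comp _ _ (ihs.trans (h k (by omega))), ih]

lemma prodSeg_cons (P : PreGroupoid) (gs : ℕ → P.Arr) (i : ℕ) :
    ∀ k, (∀ m, m < k + 1 → P.src (gs (i + m)) = P.tgt (gs (i + m + 1))) →
      prodSeg P gs i (k + 1) = P.comp (gs i) (prodSeg P gs (i + 1) k)
  | 0, _ => rfl
  | (k + 1), h => by
    have ih := prodSeg_cons P gs i k (fun m hm => h m (by omega))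
    have hsh : ∀ m, m < k → P.src (gs (i + 1 + m)) = P.tgt (gs (i + 1 + m + 1)) := by
      intro m hm
      have := h (m + 1) (by omega)
      have e1 : i + (m + 1) = i + 1 + m := by omega
      rwa [e1] at this
    have h1 : P.src (gs i) = P.tgt (prodSeg P gs (i + 1) k) := by
      rw [tgt_prodSeg P gs (i + 1) k hsh]
      simpa using h 0 (by omega)
    have h2 : P.src (prodSeg P gs (i + 1) k) = P.tgt (gs (i + k + 2)) := by
      rw [src_prodSeg P gs (i + 1) k hsh]
      have := h (k + 1) (by omega)
      have e1 : i + (k + 1) = i + 1 + k := by omega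
      rw [e1] at this
      rwa [show i + 1 + k + 1 = i + k + 2 from by omega] at this
    show P.comp (prodSeg P gs i (k + 1)) (gs (i + (k + 1) + 1)) = _
    have e3 : i + (k + 1) + 1 = i + k + 2 := by omega
    rw [e3, ih, P.assoc _ _ _ h1 h2]
    show P.comp (gs i) _ = P.comp (gs i) (P.comp (prodSeg P gs (i + 1) k) (gs (i + 1 + k + 1)))
    rw [show i + 1 + k + 1 = i + k + 2 from by omega]

lemma comp_left_cancel (P : PreGroupoid) {x a b : P.Arr}
    (ha : P.src x = P.tgt a) (hb : P.src x = P.tgt b)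
    (h : P.comp x a = P.comp x b) : a = b := by
  have h2 := congrArg (P.comp (P.inv x)) h
  rw [← P.assoc _ _ _ (by rw [P.src_inv]) ha, ← P.assoc _ _ _ (by rw [P.src_inv]) hb,
    P.inv_comp] at h2
  calc a = P.comp (P.unit (P.tgt a)) a := (P.id_comp a).symm
    _ = P.comp (P.unit (P.src x)) a := by rw [ha]
    _ = P.comp (P.unit (P.src x)) b := h2
    _ = P.comp (P.unit (P.tgt b)) b := by rw [hb]
    _ = b := P.id_comp b

/-- `cycOp` preserves the chain (composability) condition. -/
lemma chain_cycOp (P : PreGroupoid) (n : ℕ) (h : ℕ → P.Arr)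
    (hc : ∀ i, i < n → P.src (h i) = P.tgt (h (i + 1))) :
    ∀ i, i < n → P.src (cycOp P n h i) = P.tgt (cycOp P n h (i + 1)) := by
  intro i hi
  obtain ⟨nm, rfl⟩ : ∃ m, n = m + 1 := ⟨n - 1, by omega⟩
  match i with
  | 0 =>
    show P.src (prodSeg P h 0 (nm + 1)) = P.tgt (P.inv (prodSeg P h 1 nm))
    rw [P.tgt_inv, src_prodSeg P h 0 (nm + 1) (fun m hm => by simpa using hc m (by omega)),
      src_prodSeg P h 1 nm (fun m hm => hc (1 + m) (by omega))]
    simp [Nat.add_comm]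
  | 1 =>
    show P.src (P.inv (prodSeg P h 1 nm)) = P.tgt (h 1)
    rw [P.src_inv, tgt_prodSeg P h 1 nm (fun m hm => hc (1 + m) (by omega))]
  | (m + 2) =>
    show P.src (h (m + 1)) = P.tgt (h (m + 2))
    exact hc (m + 1) (by omega)

/-- The key conjugation fact: prefix products turn `cycOp` into rotation (positive part). -/
lemma px_cycOp (P : PreGroupoid) (n : ℕ) (h : ℕ → P.Arr)
    (hc : ∀ i, i < n → P.src (h i) = P.tgt (h (i + 1))) :
    ∀ m, m + 1 ≤ n → prodSeg P (cycOp P n h) 0 (m + 1) = prodSeg P h 0 m := by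
  intro m hm
  induction m with
  | zero =>
    obtain ⟨nm, rfl⟩ : ∃ m, n = m + 1 := ⟨n - 1, by omega⟩
    show P.comp (cycOp P (nm + 1) h 0) (cycOp P (nm + 1) h 1) = h 0
    show P.comp (prodSeg P h 0 (nm + 1)) (P.inv (prodSeg P h 1 (nm + 1 - 1))) = h 0
    have hA : ∀ m, m < nm → P.src (h (1 + m)) = P.tgt (h (1 + m + 1)) :=
      fun m hm => hc (1 + m) (by omega)
    have htA : P.tgt (prodSeg P h 1 nm) = P.tgt (h 1) := tgt_prodSeg P h 1 nm hA
    have h01 : P.src (h 0) = P.tgt (prodSeg P h 1 nm) := by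
      rw [htA]; exact hc 0 (by omega)
    have hcons : prodSeg P h 0 (nm + 1) = P.comp (h 0) (prodSeg P h 1 nm) := by
      have := prodSeg_cons P h 0 nm (fun m hm => by simpa using hc m (by omega))
      simpa using this
    have e : nm + 1 - 1 = nm := by omega
    rw [e, hcons, P.assoc _ _ _ h01 (by rw [P.tgt_inv]), P.comp_inv]
    calc P.comp (h 0) (P.unit (P.tgt (prodSeg P h 1 nm)))
        = P.comp (h 0) (P.unit (P.src (h 0))) := by rw [h01]
      _ = h 0 := P.comp_id _
  | succ m ih =>
    have ih := ih (by omega)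
    show P.comp (prodSeg P (cycOp P n h) 0 (m + 1)) (cycOp P n h (0 + (m + 1) + 1)) = _
    have : cycOp P n h (0 + (m + 1) + 1) = h (m + 1) := by
      show (if 0 + (m + 1) + 1 = 0 then _ else if 0 + (m + 1) + 1 = 1 then _
        else h (0 + (m + 1) + 1 - 1)) = h (m + 1)
      rw [if_neg (by omega), if_neg (by omega)]
      congr 1; omega
    rw [this, ih]
    show _ = P.comp (prodSeg P h 0 m) (h (0 + m + 1))
    congr 2
    omega

/-- Chain condition preserved along iterates. -/
lemma chain_iter (P : PreGroupoid) (n : ℕ) (gs : ℕ → P.Arr)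
    (hc : ∀ i, i < n → P.src (gs i) = P.tgt (gs (i + 1))) :
    ∀ k, ∀ i, i < n → P.src ((cycOp P n)^[k] gs i) = P.tgt ((cycOp P n)^[k] gs (i + 1)) := by
  intro k
  induction k with
  | zero => exact hc
  | succ k ih =>
    intro i hi
    rw [Function.iterate_succ_apply']
    exact chain_cycOp P n _ ih i hi

lemma px_iter (P : PreGroupoid) (n : ℕ) (gs : ℕ → P.Arr)
    (hc : ∀ i, i < n → P.src (gs i) = P.tgt (gs (i + 1))) :
    ∀ k, k ≤ n + 1 → ∀ j, j ≤ n →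
      prodSeg P ((cycOp P n)^[k] gs) 0 j
        = prodSeg P gs 0 (if j < k then n + 1 + j - k else j - k) := by
  intro k
  induction k with
  | zero =>
    intro _ j hj
    simp
  | succ k ih =>
    intro hk j hj
    have hchain := chain_iter P n gs hc k
    rw [Function.iterate_succ_apply']
    match j, hj with
    | 0, _ =>
      have h0 : prodSeg P (cycOp P n ((cycOp P n)^[k] gs)) 0 0
          = prodSeg P ((cycOp P n)^[k] gs) 0 n := rfl
      rw [h0, ih (by omega) n (le_refl n), if_neg (by omega), if_pos (by omega)]
      congr 1
      omega
    | (m + 1), hj =>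
      rw [px_cycOp P n _ hchain m hj, ih (by omega) m (by omega)]
      by_cases hmk : m < k
      · rw [if_pos hmk, if_pos (by omega)]
        congr 1
        omega
      · rw [if_neg hmk, if_neg (by omega)]
        congr 1
        omega

/-- On strings `(g_0,…,g_n)` of composable arrows (`s(g_i) = t(g_{i+1})`) with
`t(g_0) = s(g_n)`, the cyclic operator
`t(g_0,…,g_n) = (g_0 g_1 ⋯ g_n, (g_1 ⋯ g_n)⁻¹, g_1,…,g_{n-1})`
on the nerve of a groupoid satisfies `t^{n+1} = id`. -/
theorem stmt18 (P : PreGroupoid) (n : ℕ) (gs : ℕ → P.Arr)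
    (hcomp : ∀ i, i < n → P.src (gs i) = P.tgt (gs (i + 1)))
    (hcyc : P.tgt (gs 0) = P.src (gs n)) :
    ∀ j ≤ n, (cycOp P n)^[n + 1] gs j = gs j := by
  set h := (cycOp P n)^[n + 1] gs with hh
  have hpx : ∀ j, j ≤ n → prodSeg P h 0 j = prodSeg P gs 0 j := by
    intro j hj
    have := px_iter P n gs hcomp (n + 1) (le_refl _) j hj
    rw [if_pos (by omega)] at this
    rw [hh, this]
    congr 1
    omega
  have hchain := chain_iter P n gs hcomp (n + 1)
  intro j hj
  match j, hj with
  | 0, _ => exact hpx 0 (by omega)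
  | (m + 1), hj =>
    have e1 : prodSeg P h 0 (m + 1) = P.comp (prodSeg P h 0 m) (h (0 + m + 1)) := rfl
    have e2 : prodSeg P gs 0 (m + 1) = P.comp (prodSeg P gs 0 m) (gs (0 + m + 1)) := rfl
    have key : P.comp (prodSeg P gs 0 m) (h (m + 1)) = P.comp (prodSeg P gs 0 m) (gs (m + 1)) := by
      have := (hpx (m + 1) hj)
      rw [e1, e2, hpx m (by omega)] at this
      simpa using this
    have hsg : P.src (prodSeg P gs 0 m) = P.src (gs m) := by
      have := src_prodSeg P gs 0 m (fun i hi => by simpa using hcomp i (by omega))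
      simpa using this
    have hsh : P.src (prodSeg P h 0 m) = P.src (h m) := by
      have := src_prodSeg P h 0 m (fun i hi => by rw [Nat.zero_add]; exact hchain i (by omega))
      simpa using this
    have hgh : prodSeg P h 0 m = prodSeg P gs 0 m := hpx m (by omega)
    refine comp_left_cancel P ?_ ?_ key
    · rw [← hgh, hsh]
      exact hchain m (by omega)
    · rw [hsg]
      exact hcomp m (by omega)
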